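/- Let M be a finite projection monoid on a finite-dimensional vector space V, let S be the sum of the kernels of M and T the intersection of the images of M. If V = S ⊕ T and M is complete, then M is completely reducible: for every M-invariant subspace W there exists an M-invariant subspace X with V = W ⊕ X. -/
import Mathlib


/-- A projection: an idempotent linear endomorphism of nullity 1. -/
def IsProj1 {F V : Type*} [Field F] [AddCommGroup V] [Module F V]
    (p : Module.End F V) : Prop :=
  p * p = p ∧ Module.finrank F (LinearMap.ker p) = 1

/-- The set of kernels of a projection monoid `M`. -/
def kersOf {F V : Type*} [Field F] [AddCommGroup V] [Module F V]
    (M : Submonoid (Module.End F V)) : Set (Submodule F V) :=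
  {K | ∃ p ∈ M, IsProj1 p ∧ LinearMap.ker p = K}

/-- The set of images of a projection monoid `M`. -/
def imsOf {F V : Type*} [Field F] [AddCommGroup V] [Module F V]
    (M : Submonoid (Module.End F V)) : Set (Submodule F V) :=
  {L | ∃ p ∈ M, IsProj1 p ∧ LinearMap.range p = L}

/-- Let `M` be a finite projection monoid, `S` the sum of the kernels
of `M` and `T` the intersection of the images of `M`.  If `V = S ⊕ T` and `M` is
complete, then `M` is completely reducible: every `M`-invariant subspace `W` has an
`M`-invariant complement `X`. -/
theorem stmt_3 {F V : Type*} [Field F] [AddCommGroup V] [Module F V]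
    [FiniteDimensional F V]
    (M : Submonoid (Module.End F V))
    (hgen : ∃ P : Set (Module.End F V), (∀ p ∈ P, IsProj1 p) ∧ M = Submonoid.closure P)
    (hfin : (M : Set (Module.End F V)).Finite)
    (hST1 : sSup (kersOf M) ⊓ sInf (imsOf M) = ⊥)
    (hST2 : sSup (kersOf M) ⊔ sInf (imsOf M) = ⊤)
    (hcomp : ∀ K ∈ kersOf M, ∀ L ∈ imsOf M, ¬ K ≤ L →
      ∃ r ∈ M, r * r = r ∧ LinearMap.ker r = K ∧ LinearMap.range r = L) :
    ∀ W : Submodule F V, (∀ m ∈ M, ∀ w ∈ W, m w ∈ W) →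
      ∃ X : Submodule F V, (∀ m ∈ M, ∀ x ∈ X, m x ∈ X) ∧ W ⊓ X = ⊥ ∧ W ⊔ X = ⊤ := by
  intro W hW
  classical
  obtain ⟨P, hP, hMP⟩ := hgen
  set S := sSup (kersOf M) with hSdef
  set T := sInf (imsOf M) with hTdef
  have hPM : ∀ p ∈ P, p ∈ M := fun p hp => hMP ▸ Submonoid.subset_closure hp
  have hidem : ∀ p : Module.End F V, p * p = p → ∀ v : V, p (p v) = p v := by
    intro p h v
    rw [← Module.End.mul_apply, h]
  have hkerS : ∀ p ∈ P, LinearMap.ker p ≤ S :=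
    fun p hp => le_sSup ⟨p, hPM p hp, hP p hp, rfl⟩
  have hTim : ∀ p ∈ P, T ≤ LinearMap.range p :=
    fun p hp => sInf_le ⟨p, hPM p hp, hP p hp, rfl⟩
  -- every element of M moves vectors by elements of S, and fixes T pointwise
  have hMN1 : ∀ m ∈ M, (∀ v : V, m v - v ∈ S) ∧ ∀ t ∈ T, m t = t := by
    let N1 : Submonoid (Module.End F V) :=
      { carrier := {m | (∀ v : V, m v - v ∈ S) ∧ ∀ t ∈ T, m t = t}
        one_mem' := ⟨fun v => by simp, fun t _ => rfl⟩
        mul_mem' := by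
          rintro a b ⟨ha1, ha2⟩ ⟨hb1, hb2⟩
          refine ⟨fun v => ?_, fun t ht => ?_⟩
          · have h : (a * b) v - v = (a (b v) - b v) + (b v - v) := by
              rw [Module.End.mul_apply]; abel
            rw [h]; exact add_mem (ha1 (b v)) (hb1 v)
          · rw [Module.End.mul_apply, hb2 t ht, ha2 t ht] }
    have hle : M ≤ N1 := by
      rw [hMP]
      refine Submonoid.closure_le.mpr fun p hp => ?_
      obtain ⟨hpp, _⟩ := hP p hp
      refine ⟨fun v => ?_, fun t ht => ?_⟩
      · apply hkerS p hp
        rw [LinearMap.mem_ker, map_sub, hidem p hpp, sub_self]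
      · obtain ⟨z, hz⟩ := hTim p hp ht
        rw [← hz, hidem p hpp]
    exact fun m hm => hle hm
  have hSinv : ∀ m ∈ M, ∀ s ∈ S, m s ∈ S := by
    intro m hm s hs
    have h := (hMN1 m hm).1 s
    have h2 : m s = (m s - s) + s := by abel
    rw [h2]; exact add_mem h hs
  set U : Submodule F V := W ⊓ S with hUdef
  have hUinv : ∀ m ∈ M, ∀ u ∈ U, m u ∈ U := fun m hm u hu =>
    Submodule.mem_inf.mpr ⟨hW m hm u (Submodule.mem_inf.mp hu).1,
      hSinv m hm u (Submodule.mem_inf.mp hu).2⟩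
  -- the key combinatorial consequence of completeness
  have hkey : ∀ K ∈ kersOf M, ∀ L ∈ imsOf M, ¬ K ≤ U → ¬ U ≤ L → K ≤ L := by
    intro K hK L hL hKU hUL
    by_contra hKL
    obtain ⟨r, hrM, hrr, hker, hrange⟩ := hcomp K hK L hL hKL
    apply hKU
    obtain ⟨u, huU, huL⟩ := SetLike.not_le_iff_exists.mp hUL
    have hru : r u ∈ U := hUinv r hrM u huU
    have hzU : u - r u ∈ U := sub_mem huU hru
    have hzK : u - r u ∈ K := by
      rw [← hker, LinearMap.mem_ker, map_sub, hidem r hrr, sub_self]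
    have hz0 : u - r u ≠ 0 := by
      intro h0
      apply huL
      rw [← hrange]
      have h1 : u = r u := by rwa [sub_eq_zero] at h0
      exact h1 ▸ LinearMap.mem_range_self r u
    obtain ⟨q, hqM, ⟨hqq, hq1⟩, hqK⟩ := hK
    have hK1 : Module.finrank F K = 1 := by rw [← hqK]; exact hq1
    have hspan : Submodule.span F {u - r u} = K := by
      apply Submodule.eq_of_le_of_finrank_le
      · exact Submodule.span_le.mpr (by simpa using hzK)
      · rw [hK1, finrank_span_singleton hz0]
    rw [← hspan]
    exact Submodule.span_le.mpr (by simpa using hzU)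
  -- the complement of U inside S
  set XS : Submodule F V := S ⊓ sInf {L | L ∈ imsOf M ∧ ¬ U ≤ L} with hXSdef
  have hXSS : XS ≤ S := inf_le_left
  have hXSle : ∀ L ∈ imsOf M, ¬ U ≤ L → XS ≤ L :=
    fun L hL hUL => inf_le_right.trans (sInf_le ⟨hL, hUL⟩)
  have hXSmem : ∀ x : V, x ∈ S → (∀ L ∈ imsOf M, ¬ U ≤ L → x ∈ L) → x ∈ XS := by
    intro x hxS hx
    exact Submodule.mem_inf.mpr ⟨hxS, Submodule.mem_sInf.mpr fun L hL => hx L hL.1 hL.2⟩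
  have hKXS : ∀ K ∈ kersOf M, ¬ K ≤ U → K ≤ XS := by
    intro K hK hKU
    refine le_inf (le_sSup hK) (le_sInf fun L hL => hkey K hK L hL.1 hKU hL.2)
  have hXSinv : ∀ m ∈ M, ∀ x ∈ XS, m x ∈ XS := by
    let N2 : Submonoid (Module.End F V) :=
      { carrier := {m | ∀ x ∈ XS, m x ∈ XS}
        one_mem' := fun x hx => by simpa using hx
        mul_mem' := by
          intro a b ha hb x hx
          rw [Module.End.mul_apply]
          exact ha _ (hb x hx) }
    have hle : M ≤ N2 := by
      rw [hMP]
      refine Submonoid.closure_le.mpr fun p hp x hx => ?_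
      obtain ⟨hpp, hp1⟩ := hP p hp
      have hKmem : LinearMap.ker p ∈ kersOf M := ⟨p, hPM p hp, hP p hp, rfl⟩
      have hLmem : LinearMap.range p ∈ imsOf M := ⟨p, hPM p hp, hP p hp, rfl⟩
      by_cases hULp : U ≤ LinearMap.range p
      · have hKLp : ¬ LinearMap.ker p ≤ LinearMap.range p := by
          intro hle'
          have hbot : LinearMap.ker p = ⊥ := by
            rw [eq_bot_iff]
            intro z hzk
            obtain ⟨y, hy⟩ := hle' hzk
            have hz1 : p z = z := by rw [← hy, hidem p hpp]
            have hz2 : p z = 0 := LinearMap.mem_ker.mp hzk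
            simpa [hz2] using hz1.symm
          rw [hbot] at hp1; simp at hp1
        have hKU : ¬ LinearMap.ker p ≤ U := fun h => hKLp (h.trans hULp)
        have hKXS' : LinearMap.ker p ≤ XS := hKXS _ hKmem hKU
        have hsub : x - p x ∈ LinearMap.ker p := by
          rw [LinearMap.mem_ker, map_sub, hidem p hpp, sub_self]
        have heq : p x = x - (x - p x) := by abel
        rw [heq]
        exact sub_mem hx (hKXS' hsub)
      · obtain ⟨y, hy⟩ := hXSle _ hLmem hULp hx
        have heq : p x = x := by rw [← hy, hidem p hpp]
        rw [heq]; exact hx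
    exact fun m hm => hle hm
  have hUXS_bot : U ⊓ XS = ⊥ := by
    rw [eq_bot_iff]
    intro z hz
    obtain ⟨hzU, hzXS⟩ := Submodule.mem_inf.mp hz
    have hzT : z ∈ T := by
      rw [hTdef, Submodule.mem_sInf]
      intro L hL
      by_cases hUL : U ≤ L
      · exact hUL hzU
      · exact hXSle L hL hUL hzXS
    have hmem : z ∈ S ⊓ T := Submodule.mem_inf.mpr ⟨hXSS hzXS, hzT⟩
    rwa [hST1] at hmem
  have hUXS_sup : U ⊔ XS = S := by
    apply le_antisymm (sup_le inf_le_right hXSS)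
    rw [hSdef]
    refine sSup_le fun K hK => ?_
    by_cases hKU : K ≤ U
    · exact hKU.trans le_sup_left
    · exact (hKXS K hK hKU).trans le_sup_right
  -- the complement of the T-part of W inside T
  set Pw : Submodule F V := (W ⊔ S) ⊓ T with hPwdef
  have hPwT : Pw ≤ T := inf_le_right
  obtain ⟨Q, hQ⟩ := Submodule.exists_isCompl (Pw.comap T.subtype)
  set T1 : Submodule F V := Q.map T.subtype with hT1def
  have hT1T : T1 ≤ T := Submodule.map_subtype_le T Q
  have hPT1_bot : Pw ⊓ T1 = ⊥ := by
    rw [eq_bot_iff]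
    intro z hz
    obtain ⟨hzP, hzT1⟩ := Submodule.mem_inf.mp hz
    obtain ⟨q, hq, hqz⟩ := hzT1
    have hq' : q ∈ Pw.comap T.subtype := by
      rw [Submodule.mem_comap]
      simpa [hqz] using hzP
    have hmem : q ∈ Pw.comap T.subtype ⊓ Q := ⟨hq', hq⟩
    rw [hQ.inf_eq_bot] at hmem
    rw [← hqz]
    simp [(Submodule.mem_bot F).mp hmem]
  have hPT1_sup : Pw ⊔ T1 = T := by
    apply le_antisymm (sup_le hPwT hT1T)
    intro t ht
    have hmem : (⟨t, ht⟩ : T) ∈ Pw.comap T.subtype ⊔ Q := by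
      rw [hQ.sup_eq_top]; trivial
    obtain ⟨a, haP, b, hbQ, hab⟩ := Submodule.mem_sup.mp hmem
    have heq : t = (a : V) + (b : V) := by
      have h := congrArg (Subtype.val) hab
      simpa using h.symm
    rw [heq]
    exact Submodule.add_mem _ (Submodule.mem_sup_left haP)
      (Submodule.mem_sup_right ⟨b, hbQ, rfl⟩)
  refine ⟨XS ⊔ T1, ?_, ?_, ?_⟩
  · intro m hm x hx
    obtain ⟨a, ha, b, hb, rfl⟩ := Submodule.mem_sup.mp hx
    rw [map_add, (hMN1 m hm).2 b (hT1T hb)]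
    exact Submodule.add_mem _ (Submodule.mem_sup_left (hXSinv m hm a ha))
      (Submodule.mem_sup_right hb)
  · rw [eq_bot_iff]
    intro w hw
    obtain ⟨hwW, hwX⟩ := Submodule.mem_inf.mp hw
    obtain ⟨x, hx, t, htT1, rfl⟩ := Submodule.mem_sup.mp hwX
    have htP : t ∈ Pw := by
      refine Submodule.mem_inf.mpr ⟨?_, hT1T htT1⟩
      have heq : t = (x + t) - x := by abel
      rw [heq]
      exact Submodule.sub_mem _ (Submodule.mem_sup_left hwW)
        (Submodule.mem_sup_right (hXSS hx))
    have hmem : t ∈ Pw ⊓ T1 := Submodule.mem_inf.mpr ⟨htP, htT1⟩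
    rw [hPT1_bot] at hmem
    have ht0 : t = 0 := (Submodule.mem_bot F).mp hmem
    rw [ht0, add_zero] at hwW ⊢
    have hxU : x ∈ U ⊓ XS := Submodule.mem_inf.mpr
      ⟨Submodule.mem_inf.mpr ⟨hwW, hXSS hx⟩, hx⟩
    rwa [hUXS_bot] at hxU
  · apply le_antisymm le_top
    have h1 : S ≤ W ⊔ (XS ⊔ T1) := by
      rw [← hUXS_sup]
      exact sup_le (inf_le_left.trans le_sup_left) (le_sup_of_le_right le_sup_left)
    have h2 : T ≤ W ⊔ (XS ⊔ T1) := by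
      rw [← hPT1_sup]
      exact sup_le (inf_le_left.trans (sup_le le_sup_left h1))
        (le_sup_of_le_right le_sup_right)
    calc (⊤ : Submodule F V) = S ⊔ T := hST2.symm
      _ ≤ W ⊔ (XS ⊔ T1) := sup_le h1 h2
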